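/- Let d be a positive integer. In the unit group (ℤ[X]/(X^{d+1}))^× one has the relation ∏_{i=0}^{d+1} (1 - iX)^{(-1)^i · binom(d+1, i)} = 1, where the exponents are integers and negative powers are taken in the unit group. -/

import Mathlib

open Polynomial

/-- truncated ring -/
noncomputable abbrev TR (m : ℕ) : Type :=
  Polynomial ℤ ⧸ Ideal.span ({Polynomial.X ^ m} : Set (Polynomial ℤ))

noncomputable def trmk (m : ℕ) : Polynomial ℤ →+* TR m :=
  Ideal.Quotient.mk _

lemma trmk_pow_eq_zero (m : ℕ) : (trmk m X) ^ m = 0 := by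
  rw [← map_pow]
  exact Ideal.Quotient.eq_zero_iff_mem.2 (Ideal.subset_span rfl)

lemma tr_nilp (m : ℕ) (a : TR m) : IsNilpotent (a * trmk m X) :=
  ⟨m, by rw [mul_pow, trmk_pow_eq_zero, mul_zero]⟩

/-- the unit 1 - i X -/
noncomputable def wu (m i : ℕ) : (TR m)ˣ :=
  ((tr_nilp m (i : TR m)).isUnit_one_sub).unit

lemma wu_val (m i : ℕ) : (wu m i : TR m) = trmk m (1 - (i : Polynomial ℤ) * X) := by
  simp [wu, trmk, IsUnit.unit_spec]

lemma wu_zero (m : ℕ) : wu m 0 = 1 := by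
  ext; rw [wu_val]; simp

/-- constant term map -/
noncomputable def eps (m : ℕ) : TR (m + 1) →+* ℤ :=
  Ideal.Quotient.lift _ (Polynomial.evalRingHom 0) (by
    intro a ha
    obtain ⟨b, rfl⟩ := Ideal.mem_span_singleton.1 ha
    simp [Polynomial.eval_pow])

lemma eps_mk (m : ℕ) (p : Polynomial ℤ) : eps m (trmk (m + 1) p) = p.eval 0 := rfl

lemma eps_X (m : ℕ) : eps m (trmk (m + 1) X) = 0 := by
  simp [eps_mk]

/-- inverse of 1 - X as ring element -/
noncomputable def vX (m : ℕ) : TR m := ((wu m 1)⁻¹ : (TR m)ˣ)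

lemma vX_mul (m : ℕ) : vX m * trmk m (1 - X) = 1 := by
  have h := Units.inv_mul (wu m 1)
  rw [wu_val] at h
  simpa [vX] using h

/-- substitution X ↦ X/(1-X) -/
noncomputable def phi (m : ℕ) : TR m →+* TR m :=
  Ideal.Quotient.lift _ (Polynomial.eval₂RingHom (Int.castRingHom (TR m)) (trmk m X * vX m))
    (by
      intro a ha
      obtain ⟨b, rfl⟩ := Ideal.mem_span_singleton.1 ha
      rw [map_mul, map_pow]
      simp only [coe_eval₂RingHom, eval₂_X]
      rw [mul_pow, trmk_pow_eq_zero, zero_mul, zero_mul])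

lemma phi_mk (m : ℕ) (p : Polynomial ℤ) :
    phi m (trmk m p) = Polynomial.eval₂ (Int.castRingHom (TR m)) (trmk m X * vX m) p := rfl

lemma phi_X (m : ℕ) : phi m (trmk m X) = trmk m X * vX m := by
  rw [phi_mk]; simp

lemma eps_vX (m : ℕ) : eps m (vX (m + 1)) = 1 := by
  have h := congrArg (eps m) (vX_mul (m + 1))
  rw [map_mul, eps_mk, map_one] at h
  simpa using h

lemma eps_phi (m : ℕ) (a : TR (m + 1)) : eps m (phi (m + 1) a) = eps m a := by
  obtain ⟨p, rfl⟩ := Ideal.Quotient.mk_surjective a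
  have : ((eps m).comp ((phi (m + 1)).comp (trmk (m + 1)))) =
      ((eps m).comp (trmk (m + 1))) := by
    apply Polynomial.ringHom_ext
    · intro a
      have := RingHom.ext_int (((eps m).comp ((phi (m + 1)).comp (trmk (m + 1)))).comp (Int.castRingHom _))
        (((eps m).comp (trmk (m + 1))).comp (Int.castRingHom _))
      simpa using RingHom.congr_fun this a
    · show eps m (phi (m+1) (trmk (m+1) X)) = eps m (trmk (m+1) X)
      rw [phi_X, map_mul, eps_X, zero_mul]
  exact RingHom.congr_fun this p

/-- reduction TR (m+1) → TR m -/
noncomputable def red (m : ℕ) : TR (m + 1) →+* TR m :=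
  Ideal.Quotient.lift _ (trmk m)
    (by
      intro a ha
      obtain ⟨b, rfl⟩ := Ideal.mem_span_singleton.1 ha
      rw [map_mul, map_pow, pow_succ, trmk_pow_eq_zero, zero_mul, zero_mul])

lemma red_mk (m : ℕ) (p : Polynomial ℤ) : red m (trmk (m + 1) p) = trmk m p := rfl

/-- lemma B : X^m * z only depends on constant term of z -/
lemma Xpow_mul (m : ℕ) (z : TR (m + 1)) :
    (trmk (m + 1) X) ^ m * z = (eps m z : ℤ) • ((trmk (m + 1) X) ^ m) := by
  obtain ⟨r, rfl⟩ := Ideal.Quotient.mk_surjective z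
  have hr : X * r.divX + C (r.coeff 0) = r := Polynomial.X_mul_divX_add r
  calc (trmk (m + 1) X) ^ m * trmk (m + 1) r
      = (trmk (m + 1) X) ^ m * trmk (m + 1) (X * r.divX + C (r.coeff 0)) := by rw [hr]
    _ = (trmk (m + 1) X) ^ (m + 1) * trmk (m + 1) r.divX
        + (r.coeff 0 : ℤ) • ((trmk (m + 1) X) ^ m) := by
        have hc : trmk (m + 1) (C (r.coeff 0)) = ((r.coeff 0 : ℤ) : TR (m + 1)) := by
          rw [show (C (r.coeff 0) : Polynomial ℤ) = ((r.coeff 0 : ℤ) : Polynomial ℤ) by simp,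
            map_intCast]
        rw [map_add, mul_add, map_mul, hc, zsmul_eq_mul]
        ring
    _ = (eps m (trmk (m+1) r) : ℤ) • ((trmk (m + 1) X) ^ m) := by
        rw [trmk_pow_eq_zero, zero_mul, zero_add, eps_mk, ← Polynomial.coeff_zero_eq_eval_zero]

/-- if a ≡ 1 mod X^m then phi a = a in TR (m+1) -/
lemma phi_fixed (m : ℕ) (a : TR (m + 1)) (h : red m a = 1) : phi (m + 1) a = a := by
  obtain ⟨q, hq⟩ : ∃ q : Polynomial ℤ, a - 1 = trmk (m + 1) (X ^ m * q) := by
    obtain ⟨p, hp⟩ : ∃ p, trmk (m + 1) p = a - 1 := Ideal.Quotient.mk_surjective _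
    have h0 : red m (trmk (m + 1) p) = 0 := by rw [hp, map_sub, h, map_one, sub_self]
    rw [red_mk] at h0
    obtain ⟨q, hq⟩ := Ideal.mem_span_singleton.1 (Ideal.Quotient.eq_zero_iff_mem.1 h0)
    exact ⟨q, by rw [← hp, hq]⟩
  have key : phi (m + 1) (a - 1) = a - 1 := by
    have hR : trmk (m + 1) (X ^ m * q)
        = (eps m (trmk (m+1) q) : ℤ) • ((trmk (m+1) X) ^ m) := by
      rw [map_mul, map_pow, Xpow_mul]
    have hL : phi (m+1) (trmk (m + 1) (X ^ m * q))
        = (eps m (trmk (m+1) q) : ℤ) • ((trmk (m+1) X) ^ m) := by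
      rw [phi_mk, eval₂_mul, eval₂_pow, eval₂_X, mul_pow, mul_assoc, Xpow_mul]
      congr 1
      rw [map_mul, map_pow, eps_vX, one_pow, one_mul]
      exact eps_phi m (trmk (m+1) q)
    rw [hq, hL, hR]
  have := congrArg (· + 1) key
  simpa [map_sub, map_one, sub_add_cancel] using this

lemma wu_val' (m i : ℕ) : (wu m i : TR m) = 1 - (i : TR m) * trmk m X := by
  rw [wu_val, map_sub, map_one, map_mul, map_natCast]

lemma vX_mul' (m : ℕ) : vX m * (1 - trmk m X) = 1 := by
  have h := vX_mul m; rwa [map_sub, map_one] at h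

lemma phi_wu (m j : ℕ) :
    Units.map (phi m).toMonoidHom (wu m j) * wu m 1 = wu m (j + 1) := by
  apply Units.ext
  rw [Units.val_mul, Units.coe_map]
  show phi m ((wu m j : TR m)) * (wu m 1 : TR m) = (wu m (j + 1) : TR m)
  rw [wu_val', wu_val', wu_val', map_sub, map_one, map_mul, map_natCast, phi_X]
  have hv := vX_mul' m
  push_cast
  linear_combination (-(j : TR m) * trmk m X) * hv

lemma red_wu (m i : ℕ) :
    Units.map (red m).toMonoidHom (wu (m + 1) i) = wu m i := by
  apply Units.ext
  rw [Units.coe_map]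
  show red m ((wu (m + 1) i : TR (m + 1))) = (wu m i : TR m)
  rw [wu_val, wu_val, red_mk]

lemma phi_fixed_unit (m : ℕ) (U : (TR (m + 1))ˣ)
    (h : Units.map (red m).toMonoidHom U = 1) :
    Units.map (phi (m + 1)).toMonoidHom U = U := by
  apply Units.ext
  rw [Units.coe_map]
  apply phi_fixed
  have := congrArg (Units.val) h
  rw [Units.coe_map] at this
  exact this

lemma prod_zpow_const {G : Type*} [CommGroup G] (b : G) (s : Finset ℕ) (e : ℕ → ℤ) :
    ∏ i ∈ s, b ^ e i = b ^ (∑ i ∈ s, e i) := by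
  classical
  induction s using Finset.induction with
  | empty => simp
  | insert _ _ h ih => rw [Finset.prod_insert h, Finset.sum_insert h, zpow_add, ih]

/-- the main product -/
noncomputable def FF (m n : ℕ) : (TR m)ˣ :=
  ∏ i ∈ Finset.range (n + 1), wu m i ^ ((-1 : ℤ) ^ i * (n.choose i : ℤ))

lemma FF_base : FF 1 1 = 1 := by
  have hX : trmk 1 X = 0 := by
    have := trmk_pow_eq_zero 1
    rwa [pow_one] at this
  have hw : ∀ i, wu 1 i = 1 := fun i => by
    apply Units.ext
    rw [wu_val', hX, mul_zero, sub_zero, Units.val_one]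
  unfold FF
  apply Finset.prod_eq_one
  intro i _
  rw [hw, one_zpow]

lemma abstract_step {G : Type*} [CommGroup G] (w : ℕ → G) (ψ : G →* G) (n : ℕ) (hn : n ≠ 0)
    (hw0 : w 0 = 1) (hstep : ∀ j, ψ (w j) * w 1 = w (j + 1)) :
    ∏ i ∈ Finset.range (n + 2), w i ^ ((-1 : ℤ) ^ i * ((n + 1).choose i : ℤ))
      = (ψ (∏ i ∈ Finset.range (n + 1), w i ^ ((-1 : ℤ) ^ i * (n.choose i : ℤ))))⁻¹ *
        ∏ i ∈ Finset.range (n + 1), w i ^ ((-1 : ℤ) ^ i * (n.choose i : ℤ)) := by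
  set e : ℕ → ℤ := fun j => (-1 : ℤ) ^ j * (n.choose j : ℤ) with he
  set g : ℕ → G := fun i => w i ^ e i with hg
  have hg2 : ∏ j ∈ Finset.range (n + 1), g (j + 1) = ∏ i ∈ Finset.range (n + 1), g i := by
    have h1 := Finset.prod_range_succ' g (n + 1)
    have h2 := Finset.prod_range_succ g (n + 1)
    have hg0 : g 0 = 1 := by rw [hg]; simp only [he]; rw [hw0]; exact one_zpow _
    have hgn : g (n + 1) = 1 := by
      rw [hg]; simp only [he]; rw [Nat.choose_succ_self]; norm_num
    rw [hg0, mul_one] at h1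
    rw [hgn, mul_one] at h2
    rw [h1] at h2
    exact h2
  have key : ∀ j, w (j + 1) ^ ((-1 : ℤ) ^ (j + 1) * ((n + 1).choose (j + 1) : ℤ))
      = ((ψ (w j) * w 1) ^ e j)⁻¹ * g (j + 1) := by
    intro j
    have hgj : g (j + 1) = w (j + 1) ^ e (j + 1) := rfl
    rw [hgj, hstep j, ← zpow_neg, ← zpow_add]
    congr 1
    rw [Nat.choose_succ_succ n j]
    simp only [he]
    push_cast
    ring
  calc ∏ i ∈ Finset.range (n + 2), w i ^ ((-1 : ℤ) ^ i * ((n + 1).choose i : ℤ))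
      = (∏ j ∈ Finset.range (n + 1),
          w (j + 1) ^ ((-1 : ℤ) ^ (j + 1) * ((n + 1).choose (j + 1) : ℤ))) *
          (w 0 ^ ((-1 : ℤ) ^ 0 * ((n + 1).choose 0 : ℤ))) :=
        Finset.prod_range_succ' _ (n + 1)
    _ = ∏ j ∈ Finset.range (n + 1), ((ψ (w j) * w 1) ^ e j)⁻¹ * g (j + 1) := by
        rw [hw0, one_zpow, mul_one]
        exact Finset.prod_congr rfl fun j _ => key j
    _ = (∏ j ∈ Finset.range (n + 1), (ψ (w j) * w 1) ^ e j)⁻¹ *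
          ∏ j ∈ Finset.range (n + 1), g (j + 1) := by
        rw [Finset.prod_mul_distrib, ← Finset.prod_inv_distrib]
    _ = (ψ (∏ i ∈ Finset.range (n + 1), g i) * (w 1) ^ (∑ j ∈ Finset.range (n + 1), e j))⁻¹ *
          ∏ i ∈ Finset.range (n + 1), g i := by
        rw [hg2]
        congr 2
        calc ∏ j ∈ Finset.range (n + 1), (ψ (w j) * w 1) ^ e j
            = (∏ j ∈ Finset.range (n + 1), (ψ (w j)) ^ e j) *
              ∏ j ∈ Finset.range (n + 1), (w 1) ^ e j := by
              rw [← Finset.prod_mul_distrib]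
              exact Finset.prod_congr rfl fun j _ => mul_zpow _ _ _
          _ = ψ (∏ i ∈ Finset.range (n + 1), g i) *
              (w 1) ^ (∑ j ∈ Finset.range (n + 1), e j) := by
              rw [prod_zpow_const]
              congr 1
              rw [map_prod]
              exact Finset.prod_congr rfl fun j _ => (map_zpow ψ (w j) (e j)).symm
    _ = (ψ (∏ i ∈ Finset.range (n + 1), g i))⁻¹ * ∏ i ∈ Finset.range (n + 1), g i := by
        have hs : ∑ j ∈ Finset.range (n + 1), e j = 0 := by
          simp only [he]
          exact Int.alternating_sum_range_choose_of_ne hn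
        rw [hs, zpow_zero, mul_one]

lemma FF_succ (n : ℕ) (hn : n ≠ 0) :
    FF (n + 1) (n + 1)
      = (Units.map (phi (n + 1)).toMonoidHom (FF (n + 1) n))⁻¹ * FF (n + 1) n :=
  abstract_step (wu (n + 1)) (Units.map (phi (n + 1)).toMonoidHom) n hn (wu_zero _)
    (fun j => phi_wu (n + 1) j)

lemma FF_eq_one (n : ℕ) (hn : 1 ≤ n) : FF n n = 1 := by
  induction n, hn using Nat.le_induction with
  | base => exact FF_base
  | succ n hn ih =>
    have hred : Units.map (red n).toMonoidHom (FF (n + 1) n) = FF n n := by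
      unfold FF
      rw [map_prod]
      exact Finset.prod_congr rfl fun i _ => by rw [map_zpow, red_wu]
    have h1 : Units.map (red n).toMonoidHom (FF (n + 1) n) = 1 := by rw [hred, ih]
    have h2 := phi_fixed_unit n (FF (n + 1) n) h1
    rw [FF_succ n (by omega), h2]
    group

/-- The truncated polynomial ring `ℤ[X]/(X^(d+1))`. -/
def TruncPoly (d : ℕ) : Type :=
  Polynomial ℤ ⧸ Ideal.span ({Polynomial.X ^ (d + 1)} : Set (Polynomial ℤ))

noncomputable instance (d : ℕ) : CommRing (TruncPoly d) :=
  Ideal.Quotient.commRing _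

/-- The residue class of `1 - i·X` in `ℤ[X]/(X^(d+1))`. -/
noncomputable def oneSubMulX (d i : ℕ) : TruncPoly d :=
  Ideal.Quotient.mk (Ideal.span ({Polynomial.X ^ (d + 1)} : Set (Polynomial ℤ)))
    (1 - (i : Polynomial ℤ) * Polynomial.X)

/-- The Koszul relation on Chern polynomials: in `(ℤ[X]/(X^(d+1)))ˣ` one has
`∏_{i=0}^{d+1} (1 - iX)^{(-1)^i · binom(d+1, i)} = 1`. -/
theorem koszul_chern_relation (d : ℕ) (hd : 0 < d)
    (u : ℕ → (TruncPoly d)ˣ)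
    (hu : ∀ i, (u i : TruncPoly d) = oneSubMulX d i) :
    ∏ i ∈ Finset.range (d + 2), u i ^ ((-1 : ℤ) ^ i * ((d + 1).choose i : ℤ)) = 1 := by
  have hu' : ∀ i, u i = wu (d + 1) i := by
    intro i
    apply Units.ext
    rw [hu i, wu_val]
    rfl
  have heq : ∏ i ∈ Finset.range (d + 2), u i ^ ((-1 : ℤ) ^ i * ((d + 1).choose i : ℤ))
      = FF (d + 1) (d + 1) := by
    unfold FF
    exact Finset.prod_congr rfl fun i _ => by rw [hu']; rfl
  rw [heq]
  exact FF_eq_one (d + 1) (by omega)
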